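/- arXiv:2404.15378 — 4 statements merged into one kernel-verified Lean document; each statement's English description precedes it below -/
import Mathlib

section
/- Let d1, d2 ≥ 1, let Ω be a measurable parameter space, and let g : ℝ^{d1} × Ω → ℝ be measurable such that the associated generalized Radon transform is injective on finite complex Borel measures, i.e., whenever two finite complex Borel measures ρ1, ρ2 on ℝ^{d1} satisfy g(·,θ)♯ρ1 = g(·,θ)♯ρ2 for all θ ∈ Ω, then ρ1 = ρ2. Then the Partial Generalized Radon Transform with defining function g is injective on finite Borel measures: if μ, ν are finite Borel measures on ℝ^{d1} × ℝ^{d2} such that the pushforwards of μ and ν under the map (x, y) ↦ (g(x, θ), y) ∈ ℝ × ℝ^{d2} coincide for every θ ∈ Ω, then μ = ν. -/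
open MeasureTheory ENNReal
open scoped RealInnerProductSpace

noncomputable section

/-- `Euc d` is the Euclidean space `ℝ^d`. -/
abbrev Euc (d : ℕ) := EuclideanSpace ℝ (Fin d)

/-- **Injectivity of the Partial Generalized Radon Transform** (Proposition 1):
if the generalized Radon transform with defining function `g` is injective on finite
complex Borel measures, then the partial generalized Radon transform
`(x, y) ↦ (g(x, θ), y)` is injective on finite Borel measures on `ℝ^{d1} × ℝ^{d2}`. -/
theorem partial_generalized_radon_transform_injective (d1 d2 : ℕ) (hd1 : 1 ≤ d1) (hd2 : 1 ≤ d2)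
    {Ω : Type*} [MeasurableSpace Ω] (g : Euc d1 → Ω → ℝ)
    (hg : Measurable (Function.uncurry g))
    (hinj : ∀ ρ1 ρ2 : ComplexMeasure (Euc d1),
      (∀ θ : Ω, ρ1.map (fun x => g x θ) = ρ2.map (fun x => g x θ)) → ρ1 = ρ2)
    (μ ν : Measure (Euc d1 × Euc d2)) [IsFiniteMeasure μ] [IsFiniteMeasure ν]
    (h : ∀ θ : Ω,
      μ.map (fun z : Euc d1 × Euc d2 => (g z.1 θ, z.2))
        = ν.map (fun z : Euc d1 × Euc d2 => (g z.1 θ, z.2))) :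
    μ = ν := by
  have hgθ : ∀ θ : Ω, Measurable (fun x : Euc d1 => g x θ) := fun θ =>
    hg.comp (measurable_id.prodMk measurable_const)
  -- key: equality on rectangles
  have key : ∀ (A : Set (Euc d1)) (B : Set (Euc d2)), MeasurableSet A → MeasurableSet B →
      μ (A ×ˢ B) = ν (A ×ˢ B) := by
    intro A B hA hB
    set μB : Measure (Euc d1) := (μ.restrict (Prod.snd ⁻¹' B)).map Prod.fst with hμB
    set νB : Measure (Euc d1) := (ν.restrict (Prod.snd ⁻¹' B)).map Prod.fst with hνB
    have hfin1 : IsFiniteMeasure μB := by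
      apply Measure.isFiniteMeasure_map
    have hfin2 : IsFiniteMeasure νB := by
      apply Measure.isFiniteMeasure_map
    have happ : ∀ (κ : Measure (Euc d1 × Euc d2)) (S : Set (Euc d1)), MeasurableSet S →
        ((κ.restrict (Prod.snd ⁻¹' B)).map Prod.fst) S = κ (S ×ˢ B) := by
      intro κ S hS
      rw [Measure.map_apply measurable_fst hS, Measure.restrict_apply (hS.preimage measurable_fst),
        Set.prod_eq]
    set ρ1 : ComplexMeasure (Euc d1) := μB.toSignedMeasure.toComplexMeasure 0 with hρ1
    set ρ2 : ComplexMeasure (Euc d1) := νB.toSignedMeasure.toComplexMeasure 0 with hρ2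
    have hρeq : ρ1 = ρ2 := by
      apply hinj
      intro θ
      ext s hs
      rw [VectorMeasure.map_apply _ (hgθ θ) hs, VectorMeasure.map_apply _ (hgθ θ) hs]
      have hp : MeasurableSet ((fun x => g x θ) ⁻¹' s) := (hgθ θ) hs
      rw [hρ1, hρ2]
      rw [SignedMeasure.toComplexMeasure_apply, SignedMeasure.toComplexMeasure_apply]
      congr 1
      rw [Measure.toSignedMeasure_apply_measurable hp, Measure.toSignedMeasure_apply_measurable hp,
        measureReal_def, measureReal_def]
      congr 1
      rw [happ μ _ hp, happ ν _ hp]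
      have hmap := congrArg (fun m : Measure (ℝ × Euc d2) => m (s ×ˢ B)) (h θ)
      have hF : Measurable (fun z : Euc d1 × Euc d2 => (g z.1 θ, z.2)) :=
        ((hgθ θ).comp measurable_fst).prodMk measurable_snd
      rw [Measure.map_apply hF (hs.prod hB), Measure.map_apply hF (hs.prod hB)] at hmap
      convert hmap using 2 <;> · ext z; simp [Set.mem_prod]
    have hre : (ρ1 A).re = (ρ2 A).re := by rw [hρeq]
    have e1 : (ρ1 A).re = (μ (A ×ˢ B)).toReal := by
      show (μB.toSignedMeasure A : ℝ) = _
      rw [Measure.toSignedMeasure_apply_measurable hA, measureReal_def, hμB, happ μ A hA]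
    have e2 : (ρ2 A).re = (ν (A ×ˢ B)).toReal := by
      show (νB.toSignedMeasure A : ℝ) = _
      rw [Measure.toSignedMeasure_apply_measurable hA, measureReal_def, hνB, happ ν A hA]
    rw [e1, e2] at hre
    exact (ENNReal.toReal_eq_toReal_iff' (measure_ne_top μ _) (measure_ne_top ν _)).mp hre
  refine MeasureTheory.ext_of_generate_finite _ generateFrom_prod.symm isPiSystem_prod ?_ ?_
  · rintro S ⟨A, hA, B, hB, rfl⟩
    exact key A B hA hB
  · have := key Set.univ Set.univ MeasurableSet.univ MeasurableSet.univ
    simpa using this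
end
end

section
/- Let d1, d2 ≥ 1, let Ω1, Ω2 be measurable parameter spaces, and let g1 : ℝ^{d1} × Ω1 → ℝ and g2 : ℝ^{d2} × Ω2 → ℝ be measurable defining functions whose generalized Radon transforms are each injective on finite complex Borel measures (whenever two finite complex Borel measures ρ1, ρ2 on ℝ^{d_i} satisfy g_i(·,θ)♯ρ1 = g_i(·,θ)♯ρ2 for all θ ∈ Ω_i, then ρ1 = ρ2). Then the Hierarchical Hybrid Radon Transform is injective on finite Borel measures: if μ, ν are finite Borel measures on ℝ^{d1} × ℝ^{d2} such that for all θ1 ∈ Ω1, θ2 ∈ Ω2 and ψ = (ψ1, ψ2) ∈ S^1 the pushforwards of μ and ν under the map (x1, x2) ↦ ψ1 g1(x1, θ1) + ψ2 g2(x2, θ2) coincide, then μ = ν. (Proposition 2.) -/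
open MeasureTheory ENNReal
open scoped RealInnerProductSpace

noncomputable section

section Aux

open MeasureTheory Complex Real Filter Set
open scoped FourierTransform Real Topology ContDiff

noncomputable def toSchwartz (f : ℝ → ℝ) (hf : ContDiff ℝ ∞ f) (hsupp : HasCompactSupport f) :
    SchwartzMap ℝ ℂ where
  toFun x := (f x : ℂ)
  smooth' := Complex.ofRealCLM.contDiff.comp hf
  decay' := by
    intro k n
    have hg : ContDiff ℝ ∞ (fun x => (f x : ℂ)) := Complex.ofRealCLM.contDiff.comp hf
    have hs' : HasCompactSupport (fun x => (f x : ℂ)) := by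
      have : (fun x => (f x : ℂ)) = Complex.ofReal ∘ f := rfl
      rw [this]
      exact hsupp.comp_left (by simp)
    have h2 : HasCompactSupport (fun x => ‖x‖ ^ k * ‖iteratedFDeriv ℝ n (fun y => (f y : ℂ)) x‖) := by
      apply HasCompactSupport.mul_left
      exact (hs'.iteratedFDeriv n).norm
    have hc : Continuous (fun x => ‖x‖ ^ k * ‖iteratedFDeriv ℝ n (fun y => (f y : ℂ)) x‖) := by
      exact ((continuous_norm.pow k).mul ((hg.continuous_iteratedFDeriv (mod_cast le_top)).norm))
    obtain ⟨C, hC⟩ := hc.bounded_above_of_compact_support h2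
    exact ⟨C, fun x => (Real.le_norm_self _).trans (hC x)⟩

@[simp] lemma toSchwartz_apply (f : ℝ → ℝ) (hf hsupp) (x : ℝ) :
    toSchwartz f hf hsupp x = (f x : ℂ) := rfl

lemma bump_approx {a b : ℝ} (hab : a < b) :
    ∃ f : ℕ → SchwartzMap ℝ ℂ,
      (∀ n x, ‖f n x‖ ≤ 1) ∧
      (∀ x : ℝ, Tendsto (fun n => f n x) atTop
        (𝓝 (Set.indicator (Set.Ioo a b) (fun _ => (1:ℂ)) x))) := by
  set c := (a + b) / 2 with hc
  set r := (b - a) / 2 with hrdef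
  have hr : 0 < r := by simp [hrdef]; linarith
  have hball : Metric.ball c r = Set.Ioo a b := by
    rw [Real.ball_eq_Ioo]; congr 1 <;> simp [hc, hrdef] <;> ring
  have hlt : ∀ n : ℕ, r / (↑n + 2) < r := by
    intro n
    apply div_lt_self hr
    have : (0:ℝ) ≤ (n:ℝ) := Nat.cast_nonneg n
    linarith
  set bump : ∀ _ : ℕ, ContDiffBump c := fun n =>
    { rIn := r - r / (n + 2)
      rOut := r - r / (2 * (n + 2))
      rIn_pos := by have := hlt n; linarith
      rIn_lt_rOut := by
        have h2 : r / (2 * (↑n + 2)) < r / (↑n + 2) := by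
          apply div_lt_div_of_pos_left hr (by positivity)
          have : (0:ℝ) ≤ (n:ℝ) := Nat.cast_nonneg n
          linarith
        linarith } with hbump
  refine ⟨fun n => toSchwartz (bump n) ((bump n).contDiff) ((bump n).hasCompactSupport), ?_, ?_⟩
  · intro n x
    rw [toSchwartz_apply, Complex.norm_real, Real.norm_eq_abs,
      _root_.abs_of_nonneg ((bump n).nonneg)]
    exact (bump n).le_one
  · intro x
    by_cases hx : x ∈ Set.Ioo a b
    · have hdist : dist x c < r := by rwa [← Metric.mem_ball, hball]
      have htends : Tendsto (fun n : ℕ => r / (↑n + 2)) atTop (𝓝 0) := by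
        have h0 := (tendsto_const_div_atTop_nhds_zero_nat r).comp (tendsto_add_atTop_nat 2)
        refine h0.congr fun n => ?_
        simp only [Function.comp_apply]
        push_cast
        ring
      have hev : ∀ᶠ n : ℕ in atTop, r / (↑n + 2) < r - dist x c :=
        htends.eventually_lt_const (by linarith)
      have heq : (fun n : ℕ =>
          (toSchwartz (bump n) ((bump n).contDiff) ((bump n).hasCompactSupport)) x)
            =ᶠ[atTop] (fun _ => (1:ℂ)) := by
        filter_upwards [hev] with n hn
        rw [toSchwartz_apply]
        have : x ∈ Metric.closedBall c ((bump n).rIn) := by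
          rw [Metric.mem_closedBall]
          have : (bump n).rIn = r - r / (↑n + 2) := rfl
          rw [this]; linarith
        rw [(bump n).one_of_mem_closedBall this, Complex.ofReal_one]
      rw [Set.indicator_of_mem hx]
      exact Tendsto.congr' heq.symm tendsto_const_nhds
    · have heq : ∀ n : ℕ,
          (toSchwartz (bump n) ((bump n).contDiff) ((bump n).hasCompactSupport)) x = 0 := by
        intro n
        rw [toSchwartz_apply]
        have hxn : x ∉ Function.support (bump n) := by
          rw [(bump n).support_eq]
          intro hmem
          apply hx
          rw [← hball]
          refine Metric.ball_subset_ball ?_ hmem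
          have hp : 0 < r / (2*(↑n+2)) := by positivity
          have : (bump n).rOut = r - r / (2 * (↑n + 2)) := rfl
          rw [this]; linarith
        rw [Function.notMem_support.mp hxn, Complex.ofReal_zero]
      rw [Set.indicator_of_notMem hx]
      have hfq : (fun n : ℕ =>
          (toSchwartz (bump n) ((bump n).contDiff) ((bump n).hasCompactSupport)) x)
            = fun _ => (0:ℂ) := funext heq
      rw [hfq]
      exact tendsto_const_nhds
lemma schwartz_step {α : Type*} [MeasurableSpace α]
    (P Q : Measure α) [IsFiniteMeasure P] [IsFiniteMeasure Q]
    {F G : α → ℝ} (hF : Measurable F) (hG : Measurable G)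
    {φ ψ : α → ℂ} (hφ : Measurable φ) (hψ : Measurable ψ)
    (hφb : ∀ x, ‖φ x‖ ≤ 1) (hψb : ∀ x, ‖ψ x‖ ≤ 1)
    (hchar : ∀ s : ℝ, ∫ x, Complex.exp ((s * F x : ℝ) * Complex.I) * φ x ∂P
        = ∫ x, Complex.exp ((s * G x : ℝ) * Complex.I) * ψ x ∂Q)
    (f : SchwartzMap ℝ ℂ) :
    ∫ x, f (F x) * φ x ∂P = ∫ x, f (G x) * ψ x ∂Q := by
  set g := SchwartzMap.fourierTransformCLM ℂ f with hg
  have hinv : ∀ y : ℝ, f y = ∫ s : ℝ, Complex.exp ((2 * π * (s * y) : ℝ) * Complex.I) * g s := by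
    intro y
    have hco : 𝓕 ⇑f = ⇑g := rfl
    have h'f : Integrable (𝓕 ⇑f) := by rw [hco]; exact g.integrable
    have heq := f.continuous.fourierInv_fourier_eq f.integrable h'f
    conv_lhs => rw [← heq]
    rw [Real.fourierInv_eq']
    congr 1; ext v
    rw [smul_eq_mul, hco, show ⟪v, y⟫ = v * y by simp [mul_comm]]
  have key : ∀ (H : α → ℝ), Measurable H → ∀ (χ : α → ℂ), Measurable χ → (∀ x, ‖χ x‖ ≤ 1) →
      ∀ (R : Measure α), IsFiniteMeasure R →
      ∫ x, f (H x) * χ x ∂ R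
        = ∫ s : ℝ, g s * ∫ x, Complex.exp (((2 * π * s) * H x : ℝ) * Complex.I) * χ x ∂ R := by
    intro H hH χ hχ hχb R hR
    have hχint : Integrable χ R := by
      refine Integrable.mono' (integrable_const 1) hχ.aestronglyMeasurable ?_
      exact Filter.Eventually.of_forall hχb
    have hexpmeas : Measurable fun p : α × ℝ =>
        Complex.exp ((2 * π * (p.2 * H p.1) : ℝ) * Complex.I) := by
      apply Complex.measurable_exp.comp
      exact (Complex.measurable_ofReal.comp
        ((measurable_const.mul ((measurable_snd.mul (hH.comp measurable_fst))))) ).mul measurable_const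
    have hint : Integrable (fun p : α × ℝ =>
        Complex.exp ((2 * π * (p.2 * H p.1) : ℝ) * Complex.I) * (χ p.1 * g p.2)) (R.prod volume) := by
      refine Integrable.bdd_mul (c := 1) (Integrable.mul_prod hχint g.integrable)
        hexpmeas.aestronglyMeasurable (Filter.Eventually.of_forall fun p => le_of_eq ?_)
      exact Complex.norm_exp_ofReal_mul_I _
    calc ∫ x, f (H x) * χ x ∂ R
        = ∫ x, ∫ s : ℝ, Complex.exp ((2 * π * (s * H x) : ℝ) * Complex.I) * (χ x * g s) ∂volume ∂ R := by
          congr 1; ext x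
          rw [hinv (H x), ← integral_mul_const]
          congr 1; ext s; ring
      _ = ∫ s : ℝ, ∫ x, Complex.exp ((2 * π * (s * H x) : ℝ) * Complex.I) * (χ x * g s) ∂ R ∂volume := by
          exact integral_integral_swap hint
      _ = ∫ s : ℝ, g s * ∫ x, Complex.exp (((2 * π * s) * H x : ℝ) * Complex.I) * χ x ∂ R := by
          congr 1; ext s
          rw [← integral_const_mul]
          congr 1; ext x
          rw [mul_assoc]
          ring_nf
    
  rw [key F hF φ hφ hφb P inferInstance, key G hG ψ hψ hψb Q inferInstance]
  congr 1; ext s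
  rw [hchar (2 * π * s)]

lemma lemF {α : Type*} [MeasurableSpace α]
    (P Q : Measure α) [IsFiniteMeasure P] [IsFiniteMeasure Q]
    {F G : α → ℝ} (hF : Measurable F) (hG : Measurable G)
    {φ ψ : α → ℂ} (hφ : Measurable φ) (hψ : Measurable ψ)
    (hφb : ∀ x, ‖φ x‖ ≤ 1) (hψb : ∀ x, ‖ψ x‖ ≤ 1)
    (hchar : ∀ s : ℝ, ∫ x, Complex.exp ((s * F x : ℝ) * Complex.I) * φ x ∂P
        = ∫ x, Complex.exp ((s * G x : ℝ) * Complex.I) * ψ x ∂Q)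
    {E : Set ℝ} (hE : MeasurableSet E) :
    ∫ x in F ⁻¹' E, φ x ∂P = ∫ x in G ⁻¹' E, ψ x ∂Q := by
  have hφint : Integrable φ P :=
    Integrable.mono' (integrable_const 1) hφ.aestronglyMeasurable (Filter.Eventually.of_forall hφb)
  have hψint : Integrable ψ Q :=
    Integrable.mono' (integrable_const 1) hψ.aestronglyMeasurable (Filter.Eventually.of_forall hψb)
  have htot : ∫ x, φ x ∂P = ∫ x, ψ x ∂Q := by
    have h0 := hchar 0
    simpa using h0
  have h_eq : (Real.measurableSpace) = MeasurableSpace.generateFrom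
      (⋃ (a : ℚ) (b : ℚ) (_ : a < b), {Set.Ioo (a : ℝ) (b : ℝ)}) :=
    Real.borel_eq_generateFrom_Ioo_rat
  refine MeasurableSpace.induction_on_inter
    (C := fun E _ => ∫ x in F ⁻¹' E, φ x ∂P = ∫ x in G ⁻¹' E, ψ x ∂Q)
    h_eq Real.isPiSystem_Ioo_rat (by simp) ?_ ?_ ?_ E hE
  · rintro t ht
    simp only [Set.mem_iUnion, Set.mem_singleton_iff] at ht
    obtain ⟨a, b, hab, rfl⟩ := ht
    have hab' : (a:ℝ) < b := by exact_mod_cast hab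
    obtain ⟨f, hfb, hftend⟩ := bump_approx hab'
    have hind : ∀ (H : α → ℝ) (χ : α → ℂ), Measurable H →
        ∫ x in H ⁻¹' Set.Ioo (a:ℝ) (b:ℝ), χ x ∂(if True then P else Q) = 0 → True := fun _ _ _ _ => trivial
    have hPind : ∫ x in F ⁻¹' Set.Ioo (a:ℝ) (b:ℝ), φ x ∂P
        = ∫ x, Set.indicator (Set.Ioo (a:ℝ) (b:ℝ)) (fun _ => (1:ℂ)) (F x) * φ x ∂P := by
      rw [← integral_indicator (hF measurableSet_Ioo)]
      congr 1; ext x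
      by_cases hx : F x ∈ Set.Ioo (a:ℝ) (b:ℝ) <;>
        simp [Set.indicator, hx]
    have hQind : ∫ x in G ⁻¹' Set.Ioo (a:ℝ) (b:ℝ), ψ x ∂Q
        = ∫ x, Set.indicator (Set.Ioo (a:ℝ) (b:ℝ)) (fun _ => (1:ℂ)) (G x) * ψ x ∂Q := by
      rw [← integral_indicator (hG measurableSet_Ioo)]
      congr 1; ext x
      by_cases hx : G x ∈ Set.Ioo (a:ℝ) (b:ℝ) <;>
        simp [Set.indicator, hx]
    have hPtend : Tendsto (fun n => ∫ x, (f n) (F x) * φ x ∂P) atTop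
        (𝓝 (∫ x, Set.indicator (Set.Ioo (a:ℝ) (b:ℝ)) (fun _ => (1:ℂ)) (F x) * φ x ∂P)) := by
      refine tendsto_integral_of_dominated_convergence (fun _ => 1) ?_ (integrable_const 1) ?_ ?_
      · intro n; exact (((f n).continuous.measurable.comp hF).mul hφ).aestronglyMeasurable
      · intro n
        refine Filter.Eventually.of_forall fun x => ?_
        rw [norm_mul]
        exact mul_le_one₀ (hfb n (F x)) (norm_nonneg _) (hφb x)
      · refine Filter.Eventually.of_forall fun x => ?_
        exact (hftend (F x)).mul_const (φ x)
    have hQtend : Tendsto (fun n => ∫ x, (f n) (G x) * ψ x ∂Q) atTop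
        (𝓝 (∫ x, Set.indicator (Set.Ioo (a:ℝ) (b:ℝ)) (fun _ => (1:ℂ)) (G x) * ψ x ∂Q)) := by
      refine tendsto_integral_of_dominated_convergence (fun _ => 1) ?_ (integrable_const 1) ?_ ?_
      · intro n; exact (((f n).continuous.measurable.comp hG).mul hψ).aestronglyMeasurable
      · intro n
        refine Filter.Eventually.of_forall fun x => ?_
        rw [norm_mul]
        exact mul_le_one₀ (hfb n (G x)) (norm_nonneg _) (hψb x)
      · refine Filter.Eventually.of_forall fun x => ?_
        exact (hftend (G x)).mul_const (ψ x)
    have heqn : ∀ n, ∫ x, (f n) (F x) * φ x ∂P = ∫ x, (f n) (G x) * ψ x ∂Q :=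
      fun n => schwartz_step P Q hF hG hφ hψ hφb hψb hchar (f n)
    rw [hPind, hQind]
    exact tendsto_nhds_unique (hPtend.congr heqn) hQtend
  · intro t ht hCt
    have h1 := integral_add_compl (hF ht) hφint
    have h2 := integral_add_compl (hG ht) hψint
    rw [Set.preimage_compl, Set.preimage_compl]
    linear_combination htot - hCt + h1 - h2
  · intro fseq hdisj hmeas hC
    rw [Set.preimage_iUnion, Set.preimage_iUnion]
    rw [integral_iUnion (fun i => hF (hmeas i)) (fun i j hij => (hdisj hij).preimage F)
        hφint.integrableOn,
      integral_iUnion (fun i => hG (hmeas i)) (fun i j hij => (hdisj hij).preimage G)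
        hψint.integrableOn]
    exact tsum_congr hC


end Aux

/-- **Injectivity of the Hierarchical Hybrid Radon Transform** (Proposition 2):
if the generalized Radon transforms with defining functions `g1, g2` are each injective
on finite complex Borel measures, then the HHRT
`(x1, x2) ↦ ψ1 g1(x1, θ1) + ψ2 g2(x2, θ2)`, over all `θ1 ∈ Ω1`, `θ2 ∈ Ω2`,
`ψ = (ψ1, ψ2) ∈ S^1`, is injective on finite Borel measures on `ℝ^{d1} × ℝ^{d2}`. -/
theorem hierarchical_hybrid_radon_transform_injective (d1 d2 : ℕ) (hd1 : 1 ≤ d1) (hd2 : 1 ≤ d2)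
    {Ω1 Ω2 : Type*} [MeasurableSpace Ω1] [MeasurableSpace Ω2]
    (g1 : Euc d1 → Ω1 → ℝ) (g2 : Euc d2 → Ω2 → ℝ)
    (hg1 : Measurable (Function.uncurry g1)) (hg2 : Measurable (Function.uncurry g2))
    (hinj1 : ∀ ρ1 ρ2 : ComplexMeasure (Euc d1),
      (∀ θ : Ω1, ρ1.map (fun x => g1 x θ) = ρ2.map (fun x => g1 x θ)) → ρ1 = ρ2)
    (hinj2 : ∀ ρ1 ρ2 : ComplexMeasure (Euc d2),
      (∀ θ : Ω2, ρ1.map (fun x => g2 x θ) = ρ2.map (fun x => g2 x θ)) → ρ1 = ρ2)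
    (μ ν : Measure (Euc d1 × Euc d2)) [IsFiniteMeasure μ] [IsFiniteMeasure ν]
    (h : ∀ (θ1 : Ω1) (θ2 : Ω2) (ψ1 ψ2 : ℝ), ψ1 ^ 2 + ψ2 ^ 2 = 1 →
      μ.map (fun z : Euc d1 × Euc d2 => ψ1 * g1 z.1 θ1 + ψ2 * g2 z.2 θ2)
        = ν.map (fun z : Euc d1 × Euc d2 => ψ1 * g1 z.1 θ1 + ψ2 * g2 z.2 θ2)) :
    μ = ν := by
  classical
  have mg1 : ∀ θ, Measurable fun x : Euc d1 => g1 x θ := fun θ =>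
    hg1.comp (measurable_id.prodMk measurable_const)
  have mg2 : ∀ θ, Measurable fun x : Euc d2 => g2 x θ := fun θ =>
    hg2.comp (measurable_id.prodMk measurable_const)
  -- Ω1 and Ω2 are nonempty, otherwise the injectivity hypotheses are contradictory
  have hne1 : Nonempty Ω1 := by
    by_contra hne
    rw [not_nonempty_iff] at hne
    have h0 := hinj1 ((Measure.dirac 0).withDensityᵥ fun _ => (1 : ℂ)) 0
      (fun θ => (hne.elim θ))
    have h1 := congrArg (fun ρ : ComplexMeasure (Euc d1) => ρ Set.univ) h0
    simp only [VectorMeasure.zero_apply] at h1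
    rw [withDensityᵥ_apply (integrable_const _) MeasurableSet.univ] at h1
    simp at h1
  have hne2 : Nonempty Ω2 := by
    by_contra hne
    rw [not_nonempty_iff] at hne
    have h0 := hinj2 ((Measure.dirac 0).withDensityᵥ fun _ => (1 : ℂ)) 0
      (fun θ => (hne.elim θ))
    have h1 := congrArg (fun ρ : ComplexMeasure (Euc d2) => ρ Set.univ) h0
    simp only [VectorMeasure.zero_apply] at h1
    rw [withDensityᵥ_apply (integrable_const _) MeasurableSet.univ] at h1
    simp at h1
  obtain ⟨θ10⟩ := hne1
  obtain ⟨θ20⟩ := hne2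
  have hmeasT : ∀ (θ1 : Ω1) (θ2 : Ω2) (c1 c2 : ℝ),
      Measurable fun z : Euc d1 × Euc d2 => c1 * g1 z.1 θ1 + c2 * g2 z.2 θ2 :=
    fun θ1 θ2 c1 c2 => (measurable_const.mul ((mg1 θ1).comp measurable_fst)).add
      (measurable_const.mul ((mg2 θ2).comp measurable_snd))
  have hmass : μ Set.univ = ν Set.univ := by
    have h1 := congrArg (fun m : Measure ℝ => m Set.univ) (h θ10 θ20 1 0 (by norm_num))
    rw [Measure.map_apply (hmeasT θ10 θ20 1 0) MeasurableSet.univ,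
      Measure.map_apply (hmeasT θ10 θ20 1 0) MeasurableSet.univ] at h1
    simpa using h1
  -- Step 1: equality of joint characteristic functions
  have hchar : ∀ (θ1 : Ω1) (θ2 : Ω2) (t1 t2 : ℝ),
      ∫ z : Euc d1 × Euc d2,
          Complex.exp ((t1 * g1 z.1 θ1 + t2 * g2 z.2 θ2 : ℝ) * Complex.I) ∂μ
        = ∫ z : Euc d1 × Euc d2,
          Complex.exp ((t1 * g1 z.1 θ1 + t2 * g2 z.2 θ2 : ℝ) * Complex.I) ∂ν := by
    intro θ1 θ2 t1 t2
    rcases eq_or_ne (t1 ^ 2 + t2 ^ 2) 0 with h0 | hps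
    · have ht1 : t1 = 0 := by nlinarith [sq_nonneg t1, sq_nonneg t2]
      have ht2 : t2 = 0 := by nlinarith [sq_nonneg t1, sq_nonneg t2]
      subst ht1; subst ht2
      simp only [zero_mul, add_zero, Complex.ofReal_zero, Complex.exp_zero]
      rw [integral_const, integral_const, measureReal_def, measureReal_def, hmass]
    · have hr2 : 0 < t1 ^ 2 + t2 ^ 2 := lt_of_le_of_ne (by positivity) (Ne.symm hps)
      set r := Real.sqrt (t1 ^ 2 + t2 ^ 2) with hrdef
      have hrpos : 0 < r := Real.sqrt_pos.mpr hr2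
      have hrsq : r ^ 2 = t1 ^ 2 + t2 ^ 2 := Real.sq_sqrt hr2.le
      have hcirc : (t1 / r) ^ 2 + (t2 / r) ^ 2 = 1 := by
        field_simp
        linarith [hrsq]
      have hmap := h θ1 θ2 (t1 / r) (t2 / r) hcirc
      have hcont : Continuous fun y : ℝ => Complex.exp ((r * y : ℝ) * Complex.I) :=
        Complex.continuous_exp.comp ((Complex.continuous_ofReal.comp
          (continuous_const.mul continuous_id)).mul continuous_const)
      have hint := congrArg
        (fun m : Measure ℝ => ∫ y, Complex.exp ((r * y : ℝ) * Complex.I) ∂m) hmap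
      rw [integral_map (hmeasT θ1 θ2 _ _).aemeasurable hcont.aestronglyMeasurable,
        integral_map (hmeasT θ1 θ2 _ _).aemeasurable hcont.aestronglyMeasurable] at hint
      have hfix : ∀ a b : ℝ, r * (t1 / r * a + t2 / r * b) = t1 * a + t2 * b := by
        intro a b
        field_simp
      simp_rw [hfix] at hint
      exact hint
  -- Step 2: first hierarchical level, integral form
  have hA : ∀ (θ1 : Ω1) (θ2 : Ω2) (t2 : ℝ) {E : Set ℝ}, MeasurableSet E →
      ∫ z in (fun z : Euc d1 × Euc d2 => g1 z.1 θ1) ⁻¹' E,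
          Complex.exp ((t2 * g2 z.2 θ2 : ℝ) * Complex.I) ∂μ
        = ∫ z in (fun z : Euc d1 × Euc d2 => g1 z.1 θ1) ⁻¹' E,
          Complex.exp ((t2 * g2 z.2 θ2 : ℝ) * Complex.I) ∂ν := by
    intro θ1 θ2 t2 E hE
    have hwm : Measurable fun z : Euc d1 × Euc d2 =>
        Complex.exp ((t2 * g2 z.2 θ2 : ℝ) * Complex.I) :=
      Complex.measurable_exp.comp ((Complex.measurable_ofReal.comp
        (measurable_const.mul ((mg2 θ2).comp measurable_snd))).mul measurable_const)
    refine lemF μ ν ((mg1 θ1).comp measurable_fst) ((mg1 θ1).comp measurable_fst)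
      hwm hwm (fun z => le_of_eq (Complex.norm_exp_ofReal_mul_I _))
      (fun z => le_of_eq (Complex.norm_exp_ofReal_mul_I _)) (fun s => ?_) hE
    simp only [← Complex.exp_add, ← add_mul, ← Complex.ofReal_add]
    exact hchar θ1 θ2 s t2
  -- Step 3: apply injectivity of the first Radon transform
  have hB : ∀ (θ2 : Ω2) (t2 : ℝ) {A : Set (Euc d1)}, MeasurableSet A →
      ∫ z in Prod.fst ⁻¹' A, Complex.exp ((t2 * g2 z.2 θ2 : ℝ) * Complex.I) ∂μ
        = ∫ z in Prod.fst ⁻¹' A, Complex.exp ((t2 * g2 z.2 θ2 : ℝ) * Complex.I) ∂ν := by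
    intro θ2 t2 A hA'
    have hwm : Measurable fun z : Euc d1 × Euc d2 =>
        Complex.exp ((t2 * g2 z.2 θ2 : ℝ) * Complex.I) :=
      Complex.measurable_exp.comp ((Complex.measurable_ofReal.comp
        (measurable_const.mul ((mg2 θ2).comp measurable_snd))).mul measurable_const)
    have hwint_μ : Integrable (fun z : Euc d1 × Euc d2 =>
        Complex.exp ((t2 * g2 z.2 θ2 : ℝ) * Complex.I)) μ :=
      Integrable.mono' (integrable_const 1) hwm.aestronglyMeasurable
        (Filter.Eventually.of_forall fun z => le_of_eq (Complex.norm_exp_ofReal_mul_I _))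
    have hwint_ν : Integrable (fun z : Euc d1 × Euc d2 =>
        Complex.exp ((t2 * g2 z.2 θ2 : ℝ) * Complex.I)) ν :=
      Integrable.mono' (integrable_const 1) hwm.aestronglyMeasurable
        (Filter.Eventually.of_forall fun z => le_of_eq (Complex.norm_exp_ofReal_mul_I _))
    have hρ := hinj1
      ((μ.withDensityᵥ (fun z : Euc d1 × Euc d2 =>
        Complex.exp ((t2 * g2 z.2 θ2 : ℝ) * Complex.I))).map Prod.fst)
      ((ν.withDensityᵥ (fun z : Euc d1 × Euc d2 =>
        Complex.exp ((t2 * g2 z.2 θ2 : ℝ) * Complex.I))).map Prod.fst) ?_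
    · have hval := congrArg (fun ρ : ComplexMeasure (Euc d1) => ρ A) hρ
      rw [VectorMeasure.map_apply _ measurable_fst hA',
        VectorMeasure.map_apply _ measurable_fst hA',
        withDensityᵥ_apply hwint_μ (measurable_fst hA'),
        withDensityᵥ_apply hwint_ν (measurable_fst hA')] at hval
      exact hval
    · intro θ1
      refine VectorMeasure.ext fun E hE => ?_
      rw [VectorMeasure.map_apply _ (mg1 θ1) hE, VectorMeasure.map_apply _ (mg1 θ1) hE,
        VectorMeasure.map_apply _ measurable_fst ((mg1 θ1) hE),
        VectorMeasure.map_apply _ measurable_fst ((mg1 θ1) hE),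
        withDensityᵥ_apply hwint_μ (measurable_fst ((mg1 θ1) hE)),
        withDensityᵥ_apply hwint_ν (measurable_fst ((mg1 θ1) hE))]
      exact hA θ1 θ2 t2 hE
  -- Step 4: second hierarchical level
  have hAB : ∀ (A : Set (Euc d1)) (B : Set (Euc d2)), MeasurableSet A → MeasurableSet B →
      μ (A ×ˢ B) = ν (A ×ˢ B) := by
    intro A B hA' hB'
    have hρ := hinj2
      (((μ.restrict (Prod.fst ⁻¹' A)).withDensityᵥ (fun _ => (1 : ℂ))).map Prod.snd)
      (((ν.restrict (Prod.fst ⁻¹' A)).withDensityᵥ (fun _ => (1 : ℂ))).map Prod.snd) ?_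
    · have hval := congrArg (fun ρ : ComplexMeasure (Euc d2) => ρ B) hρ
      simp only at hval
      rw [VectorMeasure.map_apply _ measurable_snd hB',
        VectorMeasure.map_apply _ measurable_snd hB',
        withDensityᵥ_apply (integrable_const _) (measurable_snd hB'),
        withDensityᵥ_apply (integrable_const _) (measurable_snd hB'),
        setIntegral_const, setIntegral_const, measureReal_def, measureReal_def,
        Measure.restrict_apply (measurable_snd hB'),
        Measure.restrict_apply (measurable_snd hB')] at hval
      have hre : (μ (Prod.snd ⁻¹' B ∩ Prod.fst ⁻¹' A)).toReal
          = (ν (Prod.snd ⁻¹' B ∩ Prod.fst ⁻¹' A)).toReal := by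
        have := congrArg Complex.re hval
        simpa using this
      have hmeq : μ (Prod.snd ⁻¹' B ∩ Prod.fst ⁻¹' A)
          = ν (Prod.snd ⁻¹' B ∩ Prod.fst ⁻¹' A) :=
        (ENNReal.toReal_eq_toReal_iff' (measure_ne_top μ _) (measure_ne_top ν _)).mp hre
      have hset : A ×ˢ B = Prod.snd ⁻¹' B ∩ Prod.fst ⁻¹' A := by
        rw [Set.prod_eq, Set.inter_comm]
      rw [hset, hmeq]
    · intro θ2
      refine VectorMeasure.ext fun E hE => ?_
      rw [VectorMeasure.map_apply _ (mg2 θ2) hE, VectorMeasure.map_apply _ (mg2 θ2) hE,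
        VectorMeasure.map_apply _ measurable_snd ((mg2 θ2) hE),
        VectorMeasure.map_apply _ measurable_snd ((mg2 θ2) hE),
        withDensityᵥ_apply (integrable_const _) (measurable_snd ((mg2 θ2) hE)),
        withDensityᵥ_apply (integrable_const _) (measurable_snd ((mg2 θ2) hE))]
      refine lemF (μ.restrict (Prod.fst ⁻¹' A)) (ν.restrict (Prod.fst ⁻¹' A))
        ((mg2 θ2).comp measurable_snd) ((mg2 θ2).comp measurable_snd)
        measurable_const measurable_const (fun _ => by norm_num) (fun _ => by norm_num)
        (fun s => ?_) hE
      simp only [mul_one]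
      exact hB θ2 s hA'
  -- Step 5: conclude via the π-system of measurable rectangles
  refine MeasureTheory.ext_of_generate_finite _
    generateFrom_prod.symm isPiSystem_prod ?_ hmass
  rintro t ⟨A, hA', B, hB', rfl⟩
  exact hAB A B hA' hB'

end
end

section
/- Let d1, d2 ≥ 1 and let μ, ν be finite Borel measures on ℝ^{d1} × ℝ^{d2}. If for every θ1 ∈ S^{d1−1}, θ2 ∈ S^{d2−1} and ψ = (ψ1, ψ2) ∈ S^1 the pushforwards of μ and ν under the map (x1, x2) ↦ ψ1 ⟨x1, θ1⟩ + ψ2 ⟨x2, θ2⟩ coincide, then μ = ν. (Injectivity of the Hierarchical Hybrid Radon Transform with linear defining functions.) -/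
open MeasureTheory ENNReal
open scoped RealInnerProductSpace

open Filter Set Metric Topology FourierTransform SchwartzMap
open scoped Manifold

noncomputable section

open FourierTransform SchwartzMap
open scoped RealInnerProductSpace

section MkSchwartz
variable {D : Type*} [NormedAddCommGroup D] [NormedSpace ℝ D]

/-- A smooth compactly supported function is a Schwartz function. -/
def mkSchwartz (g : D → ℂ) (hg : ContDiff ℝ (↑(⊤ : ℕ∞)) g) (hsupp : HasCompactSupport g) :
    SchwartzMap D ℂ where
  toFun := g
  smooth' := hg
  decay' := by
    intro k n
    set φ : D → ℝ := fun x => ‖x‖ ^ k * ‖iteratedFDeriv ℝ n g x‖ with hφ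
    have hφc : Continuous φ :=
      ((continuous_norm.pow k).mul (hg.continuous_iteratedFDeriv (by exact_mod_cast le_top)).norm)
    have hsupp' : HasCompactSupport φ := by
      apply HasCompactSupport.mul_left
      exact (hsupp.iteratedFDeriv n).norm
    obtain ⟨x₀, hx₀⟩ := hφc.exists_forall_ge_of_hasCompactSupport hsupp'
    exact ⟨φ x₀, fun x => hx₀ x⟩

end MkSchwartz

section Key
variable {V : Type*} [NormedAddCommGroup V] [InnerProductSpace ℝ V] [FiniteDimensional ℝ V]
  [MeasurableSpace V] [BorelSpace V]

lemma integral_schwartz_eq (P Q : Measure V) [IsFiniteMeasure P] [IsFiniteMeasure Q]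
    (h : ∀ w : V, P.map (fun v => ⟪v, w⟫) = Q.map (fun v => ⟪v, w⟫)) (f : SchwartzMap V ℂ) :
    ∫ v, f v ∂P = ∫ v, f v ∂Q := by
  have hchar : ∀ (R : Measure V), VectorFourier.fourierIntegral Real.fourierChar R
      ((innerₗ V).flip) (fun _ => (1:ℂ)) = fun w => ∫ t : ℝ,
        Real.fourierChar (-t) • (1:ℂ) ∂(R.map (fun v => ⟪v, w⟫)) := by
    intro R
    ext w
    rw [integral_map (by exact (continuous_id.inner continuous_const).aemeasurable)
      (by exact ((Real.continuous_fourierChar.comp continuous_neg).smul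
        continuous_const).aestronglyMeasurable)]
    simp only [VectorFourier.fourierIntegral, flip_innerₗ, innerₗ_apply_apply]
  set g : SchwartzMap V ℂ := (fourierTransformCLE ℂ (SchwartzMap V ℂ)).symm f with hg
  have hgf : 𝓕 ⇑g = ⇑f := by
    have h2 := (fourierTransformCLE ℂ (SchwartzMap V ℂ)).apply_symm_apply f
    calc 𝓕 ⇑g = ⇑(fourierTransformCLE ℂ _ g) := rfl
    _ = ⇑f := by rw [h2]
  have key : ∀ (R : Measure V) [IsFiniteMeasure R],
      ∫ v, f v ∂ R = ∫ x, (ContinuousLinearMap.mul ℂ ℂ) (g x)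
        (VectorFourier.fourierIntegral Real.fourierChar R ((innerₗ V).flip)
          (fun _ => (1:ℂ)) x) := by
    intro R _
    rw [← VectorFourier.integral_bilin_fourierIntegral_eq_flip
      (ContinuousLinearMap.mul ℂ ℂ) Real.continuous_fourierChar
      (by exact continuous_inner) g.integrable (integrable_const (1:ℂ))]
    congr 1
    ext w
    symm
    change (VectorFourier.fourierIntegral Real.fourierChar volume (innerₗ V) (⇑g) w) * 1 = f w
    rw [mul_one]
    have h3 : VectorFourier.fourierIntegral Real.fourierChar volume (innerₗ V) (⇑g) w
        = 𝓕 ⇑g w := rfl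
    rw [h3, hgf]
  rw [key P, key Q, hchar P, hchar Q]
  congr 1
  ext x
  simp only [h x]

end Key

@[simp] lemma mkSchwartz_apply {D : Type*} [NormedAddCommGroup D] [NormedSpace ℝ D]
    (g : D → ℂ) (hg : ContDiff ℝ (↑(⊤ : ℕ∞)) g) (hsupp : HasCompactSupport g) (x : D) :
    mkSchwartz g hg hsupp x = g x := rfl

section Key2
variable {V : Type*} [NormedAddCommGroup V] [InnerProductSpace ℝ V] [FiniteDimensional ℝ V]
  [MeasurableSpace V] [BorelSpace V]

open Metric Topology
open scoped Manifold

lemma measure_ext_of_schwartz (P Q : Measure V) [IsFiniteMeasure P] [IsFiniteMeasure Q]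
    (hs : ∀ f : SchwartzMap V ℂ, ∫ v, f v ∂P = ∫ v, f v ∂Q) : P = Q := by
  have hreal : ∀ g : V → ℝ, ContDiff ℝ (↑(⊤:ℕ∞)) g → HasCompactSupport g →
      ∫ v, g v ∂P = ∫ v, g v ∂Q := by
    intro g hg hsupp
    have hC : ContDiff ℝ (↑(⊤:ℕ∞)) (fun x => (g x : ℂ)) :=
      Complex.ofRealCLM.contDiff.comp hg
    have hCs : HasCompactSupport (fun x => (g x : ℂ)) :=
      hsupp.comp_left (g := Complex.ofReal) Complex.ofReal_zero
    have h2 := hs (mkSchwartz _ hC hCs)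
    simp only [mkSchwartz_apply] at h2
    have hIP : Integrable (fun v => ((g v : ℝ) : ℂ)) P :=
      hC.continuous.integrable_of_hasCompactSupport hCs
    have hIQ : Integrable (fun v => ((g v : ℝ) : ℂ)) Q :=
      hC.continuous.integrable_of_hasCompactSupport hCs
    have e1 := ContinuousLinearMap.integral_comp_comm Complex.reCLM hIP
    have e2 := ContinuousLinearMap.integral_comp_comm Complex.reCLM hIQ
    simp only [Complex.reCLM_apply, Complex.ofReal_re] at e1 e2
    rw [e1, e2, h2]
  have hcpt : ∀ K : Set V, IsCompact K → P K = Q K := by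
    intro K hK
    have ex : ∀ n : ℕ, ∃ g : V → ℝ, Function.support g = thickening (1/(n+1)) K ∧
        ContMDiff 𝓘(ℝ, V) 𝓘(ℝ) (↑(⊤:ℕ∞)) g ∧ Set.range g ⊆ Icc 0 1 ∧ ∀ x ∈ K, g x = 1 := by
      intro n
      rcases exists_contMDiff_support_eq_eq_one_iff 𝓘(ℝ, V) isOpen_thickening hK.isClosed
        (self_subset_thickening (δ := 1/(n+1)) (by positivity) K) with ⟨g, g_smooth, g_range, g_supp, hg⟩
      exact ⟨g, g_supp, g_smooth, g_range, fun x hx => (hg x).1 hx⟩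
    choose g g_supp g_diff g_range hg1 using ex
    have g_cd : ∀ n, ContDiff ℝ (↑(⊤:ℕ∞)) (g n) := fun n => (g_diff n).contDiff
    have g_hcs : ∀ n, HasCompactSupport (g n) := by
      intro n
      apply HasCompactSupport.of_support_subset_isCompact (hK.cthickening (r := 1/(n+1)))
      rw [g_supp n]
      exact thickening_subset_cthickening _ _
    have g_bd : ∀ n x, ‖g n x‖ ≤ 1 := by
      intro n x
      have := g_range n ⟨x, rfl⟩
      rw [Real.norm_eq_abs, abs_le]
      exact ⟨by linarith [this.1], this.2⟩
    have g_nonneg : ∀ n x, 0 ≤ g n x := fun n x => (g_range n ⟨x, rfl⟩).1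
    have g_tendsto : ∀ x, Tendsto (fun n => g n x) atTop (𝓝 (K.indicator 1 x)) := by
      intro x
      by_cases hx : x ∈ K
      · simp only [indicator_of_mem hx]
        exact tendsto_const_nhds.congr (fun n => (hg1 n x hx).symm)
      · simp only [indicator_of_notMem hx]
        rcases K.eq_empty_or_nonempty with hKe | hKn
        · apply tendsto_const_nhds.congr (fun n => ?_)
          by_contra hne
          have : x ∈ Function.support (g n) := by
            simp only [Function.mem_support]
            exact fun hh => hne hh.symm
          rw [g_supp n, hKe, thickening_empty] at this
          exact this
        · have hd : 0 < infDist x K := (hK.isClosed.notMem_iff_infDist_pos hKn).1 hx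
          rcases exists_nat_gt (1 / infDist x K) with ⟨N, hN⟩
          apply tendsto_atTop_of_eventually_const (i₀ := N)
          intro n hn
          by_contra hne
          have hmem : x ∈ thickening (1/(n+1)) K := by
            rw [← g_supp n]
            simp only [Function.mem_support]
            exact fun hh => hne hh
          rw [mem_thickening_iff_infDist_lt hKn] at hmem
          have h1 : 1/((n:ℝ)+1) ≤ 1/((N:ℝ)+1) := by
            apply one_div_le_one_div_of_le (by positivity)
            exact_mod_cast by omega
          have h2 : 1/((N:ℝ)+1) < infDist x K := by
            rw [div_lt_iff₀ (by positivity)]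
            rw [div_lt_iff₀ hd] at hN
            nlinarith [hd]
          linarith
    have hlim : ∀ (R : Measure V) [IsFiniteMeasure R],
        Tendsto (fun n => ∫ v, g n v ∂ R) atTop (𝓝 (R K).toReal) := by
      intro R _
      have := tendsto_integral_of_dominated_convergence (μ := R)
        (F := fun n v => g n v) (f := K.indicator 1) (bound := fun _ => 1)
        (fun n => ((g_diff n).continuous).aestronglyMeasurable)
        (integrable_const 1)
        (fun n => Filter.Eventually.of_forall (fun x => g_bd n x))
        (Filter.Eventually.of_forall g_tendsto)
      rwa [integral_indicator_one hK.measurableSet] at this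
    have := tendsto_nhds_unique ((hlim P).congr (fun n => hreal (g n) (g_cd n) (g_hcs n))) (hlim Q)
    exact ((ENNReal.toReal_eq_toReal_iff' (measure_ne_top P K) (measure_ne_top Q K)).1 this)
  -- extend from compacts to all sets
  have hclosed : ∀ F : Set V, IsClosed F → P F = Q F := by
    intro F hF
    have hmono : Monotone (fun n : ℕ => F ∩ closedBall 0 n) := by
      intro a b hab
      exact inter_subset_inter le_rfl (closedBall_subset_closedBall (by exact_mod_cast hab))
    have hunion : ⋃ n : ℕ, (F ∩ closedBall 0 n) = F := by
      ext x
      simp only [mem_iUnion, mem_inter_iff, mem_closedBall, dist_zero_right]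
      constructor
      · rintro ⟨n, hx, -⟩; exact hx
      · intro hx
        rcases exists_nat_ge ‖x‖ with ⟨n, hn⟩
        exact ⟨n, hx, hn⟩
    have hP := tendsto_measure_iUnion_atTop (μ := P) hmono
    have hQ := tendsto_measure_iUnion_atTop (μ := Q) hmono
    rw [hunion] at hP hQ
    have : ∀ n : ℕ, P (F ∩ closedBall 0 n) = Q (F ∩ closedBall 0 n) := fun n =>
      hcpt _ ((isCompact_closedBall 0 n).inter_left hF)
    exact tendsto_nhds_unique (hP.congr this) hQ
  apply MeasureTheory.ext_of_generate_finite _ ?_ isPiSystem_isClosed ?_ ?_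
  · rw [BorelSpace.measurable_eq (α := V), borel_eq_generateFrom_isClosed]
  · exact fun F hF => hclosed F hF
  · exact hclosed univ isClosed_univ

end Key2

section Final
variable {V : Type*} [NormedAddCommGroup V] [InnerProductSpace ℝ V] [FiniteDimensional ℝ V]
  [MeasurableSpace V] [BorelSpace V]

lemma measure_ext_of_map_inner (P Q : Measure V) [IsFiniteMeasure P] [IsFiniteMeasure Q]
    (h : ∀ w : V, P.map (fun v => ⟪v, w⟫) = Q.map (fun v => ⟪v, w⟫)) : P = Q :=
  measure_ext_of_schwartz P Q (integral_schwartz_eq P Q h)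
end Final

/-- **Injectivity of the Hierarchical Hybrid Radon Transform with linear defining
functions**: if two finite Borel measures on `ℝ^{d1} × ℝ^{d2}` have equal pushforwards
under `(x1, x2) ↦ ψ1 ⟨x1, θ1⟩ + ψ2 ⟨x2, θ2⟩` for all unit vectors `θ1 ∈ S^{d1-1}`,
`θ2 ∈ S^{d2-1}` and all `ψ = (ψ1, ψ2) ∈ S^1`, then they are equal. -/
theorem hhrt_linear_injective (d1 d2 : ℕ) (hd1 : 1 ≤ d1) (hd2 : 1 ≤ d2)
    (μ ν : Measure (Euc d1 × Euc d2)) [IsFiniteMeasure μ] [IsFiniteMeasure ν]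
    (h : ∀ θ1 : Euc d1, ‖θ1‖ = 1 → ∀ θ2 : Euc d2, ‖θ2‖ = 1 →
      ∀ ψ1 ψ2 : ℝ, ψ1 ^ 2 + ψ2 ^ 2 = 1 →
      μ.map (fun z : Euc d1 × Euc d2 => ψ1 * ⟪z.1, θ1⟫ + ψ2 * ⟪z.2, θ2⟫)
        = ν.map (fun z : Euc d1 × Euc d2 => ψ1 * ⟪z.1, θ1⟫ + ψ2 * ⟪z.2, θ2⟫)) :
    μ = ν := by
  set e1 : Euc d1 := EuclideanSpace.single (⟨0, hd1⟩ : Fin d1) (1:ℝ) with he1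
  set e2 : Euc d2 := EuclideanSpace.single (⟨0, hd2⟩ : Fin d2) (1:ℝ) with he2
  have he1n : ‖e1‖ = 1 := by rw [he1, EuclideanSpace.norm_single]; norm_num
  have he2n : ‖e2‖ = 1 := by rw [he2, EuclideanSpace.norm_single]; norm_num
  have hsm : ∀ (ψ1 ψ2 : ℝ) (θ1 : Euc d1) (θ2 : Euc d2), Measurable
      (fun z : Euc d1 × Euc d2 => ψ1 * ⟪z.1, θ1⟫ + ψ2 * ⟪z.2, θ2⟫) := by
    intro ψ1 ψ2 θ1 θ2
    apply Measurable.add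
    · exact (measurable_const.mul ((continuous_fst.inner continuous_const).measurable))
    · exact (measurable_const.mul ((continuous_snd.inner continuous_const).measurable))
  have huniv : μ Set.univ = ν Set.univ := by
    have hh := h e1 he1n e2 he2n 1 0 (by norm_num)
    have h1 : μ Set.univ = (μ.map (fun z : Euc d1 × Euc d2 =>
        (1:ℝ) * ⟪z.1, e1⟫ + 0 * ⟪z.2, e2⟫)) Set.univ := by
      rw [Measure.map_apply (hsm 1 0 e1 e2) MeasurableSet.univ, Set.preimage_univ]
    have h2 : ν Set.univ = (ν.map (fun z : Euc d1 × Euc d2 =>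
        (1:ℝ) * ⟪z.1, e1⟫ + 0 * ⟪z.2, e2⟫)) Set.univ := by
      rw [Measure.map_apply (hsm 1 0 e1 e2) MeasurableSet.univ, Set.preimage_univ]
    rw [h1, h2, hh]
  have hcomb : ∀ (u1 : Euc d1) (u2 : Euc d2),
      μ.map (fun z : Euc d1 × Euc d2 => ⟪z.1, u1⟫ + ⟪z.2, u2⟫)
        = ν.map (fun z : Euc d1 × Euc d2 => ⟪z.1, u1⟫ + ⟪z.2, u2⟫) := by
    intro u1 u2
    by_cases h0 : u1 = 0 ∧ u2 = 0
    · obtain ⟨rfl, rfl⟩ := h0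
      simp only [inner_zero_right, add_zero]
      rw [Measure.map_const, Measure.map_const, huniv]
    · set r := Real.sqrt (‖u1‖^2 + ‖u2‖^2) with hr
      have hr2 : r^2 = ‖u1‖^2 + ‖u2‖^2 := Real.sq_sqrt (by positivity)
      have hrpos : 0 < r := by
        rw [hr, Real.sqrt_pos]
        rcases not_and_or.mp h0 with h1 | h2
        · have : 0 < ‖u1‖ := norm_pos_iff.mpr h1
          nlinarith [sq_nonneg ‖u2‖]
        · have : 0 < ‖u2‖ := norm_pos_iff.mpr h2
          nlinarith [sq_nonneg ‖u1‖]
      set ψ1 := ‖u1‖ / r with hψ1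
      set ψ2 := ‖u2‖ / r with hψ2
      have hψ : ψ1^2 + ψ2^2 = 1 := by
        rw [hψ1, hψ2, div_pow, div_pow, ← add_div, hr2,
          div_self (by rw [← hr2]; exact pow_ne_zero 2 hrpos.ne')]
      have hex1 : ∃ θ1 : Euc d1, ‖θ1‖ = 1 ∧ ∀ z1 : Euc d1,
          ‖u1‖ * ⟪z1, θ1⟫ = ⟪z1, u1⟫ := by
        rcases eq_or_ne u1 0 with rfl | hu
        · exact ⟨e1, he1n, fun z1 => by simp⟩
        · refine ⟨‖u1‖⁻¹ • u1, ?_, fun z1 => ?_⟩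
          · rw [norm_smul, norm_inv, norm_norm, inv_mul_cancel₀ (norm_ne_zero_iff.mpr hu)]
          · rw [real_inner_smul_right, ← mul_assoc,
              mul_inv_cancel₀ (norm_ne_zero_iff.mpr hu), one_mul]
      have hex2 : ∃ θ2 : Euc d2, ‖θ2‖ = 1 ∧ ∀ z2 : Euc d2,
          ‖u2‖ * ⟪z2, θ2⟫ = ⟪z2, u2⟫ := by
        rcases eq_or_ne u2 0 with rfl | hu
        · exact ⟨e2, he2n, fun z2 => by simp⟩
        · refine ⟨‖u2‖⁻¹ • u2, ?_, fun z2 => ?_⟩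
          · rw [norm_smul, norm_inv, norm_norm, inv_mul_cancel₀ (norm_ne_zero_iff.mpr hu)]
          · rw [real_inner_smul_right, ← mul_assoc,
              mul_inv_cancel₀ (norm_ne_zero_iff.mpr hu), one_mul]
      obtain ⟨θ1, hθ1n, hθ1e⟩ := hex1
      obtain ⟨θ2, hθ2n, hθ2e⟩ := hex2
      have hfun : (fun z : Euc d1 × Euc d2 => ⟪z.1, u1⟫ + ⟪z.2, u2⟫)
          = (fun t => r * t) ∘ (fun z : Euc d1 × Euc d2 =>
            ψ1 * ⟪z.1, θ1⟫ + ψ2 * ⟪z.2, θ2⟫) := by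
        funext z
        simp only [Function.comp_apply, mul_add]
        have hrne : r ≠ 0 := hrpos.ne'
        have hz1 : r * (ψ1 * ⟪z.1, θ1⟫) = ⟪z.1, u1⟫ := by
          rw [← hθ1e z.1, hψ1]
          field_simp
        have hz2 : r * (ψ2 * ⟪z.2, θ2⟫) = ⟪z.2, u2⟫ := by
          rw [← hθ2e z.2, hψ2]
          field_simp
        rw [hz1, hz2]
      rw [hfun, ← Measure.map_map (measurable_const_mul r) (hsm ψ1 ψ2 θ1 θ2),
        ← Measure.map_map (measurable_const_mul r) (hsm ψ1 ψ2 θ1 θ2),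
        h θ1 hθ1n θ2 hθ2n ψ1 ψ2 hψ]
  -- transfer to the L2 product space
  set W := WithLp 2 (Euc d1 × Euc d2) with hW
  borelize W
  set L : W ≃L[ℝ] Euc d1 × Euc d2 :=
    WithLp.prodContinuousLinearEquiv 2 ℝ (Euc d1) (Euc d2) with hL
  have hLm : Measurable (⇑L) := L.continuous.measurable
  have hLsm : Measurable (⇑L.symm) := L.symm.continuous.measurable
  haveI : IsFiniteMeasure (μ.map ⇑L.symm) := Measure.isFiniteMeasure_map μ _
  haveI : IsFiniteMeasure (ν.map ⇑L.symm) := Measure.isFiniteMeasure_map ν _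
  have hinner : ∀ w : W, Measurable (fun v : W => ⟪v, w⟫) := fun w =>
    (continuous_id.inner continuous_const).measurable
  have key : μ.map ⇑L.symm = ν.map ⇑L.symm := by
    apply measure_ext_of_map_inner
    intro w
    rw [Measure.map_map (hinner w) hLsm, Measure.map_map (hinner w) hLsm]
    have hcompose : (fun v : W => ⟪v, w⟫) ∘ ⇑L.symm
        = fun z : Euc d1 × Euc d2 => ⟪z.1, w.fst⟫ + ⟪z.2, w.snd⟫ := by
      funext z
      simp only [Function.comp_apply]
      rw [show (L.symm z : W) = (WithLp.equiv 2 _).symm z from rfl]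
      rw [WithLp.prod_inner_apply]
      rfl
    rw [hcompose]
    exact hcomb w.fst w.snd
  have : (μ.map ⇑L.symm).map ⇑L = (ν.map ⇑L.symm).map ⇑L := by rw [key]
  rwa [Measure.map_map hLm hLsm, Measure.map_map hLm hLsm,
    show (⇑L ∘ ⇑L.symm) = id from funext fun z => L.apply_symm_apply z,
    Measure.map_id, Measure.map_id] at this
end
end

section
/- For Borel probability measures μ, ν on ℝ^{d1} × ℝ^{d2} with finite first moments, the hierarchical hybrid sliced Wasserstein distance of order 1 with linear defining functions satisfies H2SW_1(μ, ν) ≤ W_1(μ, ν; c), where W_1(μ, ν; c) is the joint Wasserstein-1 distance with ground cost c((x1, x2), (y1, y2)) = ‖x1 − y1‖₂ + ‖x2 − y2‖₂. (Proposition 3(iii).) -/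
open MeasureTheory ENNReal
open scoped RealInnerProductSpace

noncomputable section

/-- Couplings of two measures: measures on the product with prescribed marginals. -/
def couplings {X Y : Type*} [MeasurableSpace X] [MeasurableSpace Y]
    (α : Measure X) (β : Measure Y) : Set (Measure (X × Y)) :=
  {π | π.map Prod.fst = α ∧ π.map Prod.snd = β}

/-- `W_p^p`: the `p`-th power of the Wasserstein distance, as an optimal transport cost. -/
def WpPow {X : Type*} [MeasurableSpace X] [EDist X] (p : ℝ) (α β : Measure X) : ℝ≥0∞ :=
  ⨅ π ∈ couplings α β, ∫⁻ z : X × X, edist z.1 z.2 ^ p ∂π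

/-- The Wasserstein distance of order `p`. -/
def Wp {X : Type*} [MeasurableSpace X] [EDist X] (p : ℝ) (α β : Measure X) : ℝ≥0∞ :=
  WpPow p α β ^ (1 / p)
/-- The uniform probability measure on the unit sphere of `ℝ^d`. -/
def sphereUniform (d : ℕ) : Measure (Metric.sphere (0 : Euc d) 1) :=
  ((volume : Measure (Euc d)).toSphere Set.univ)⁻¹ • (volume : Measure (Euc d)).toSphere
/-- The HHRT projection map `T_{θ1,θ2,ψ}(x1,x2) = ψ1 g1(x1,θ1) + ψ2 g2(x2,θ2)`. -/
def Tmap {d1 d2 : ℕ} {Ω1 Ω2 : Type*} (g1 : Euc d1 → Ω1 → ℝ) (g2 : Euc d2 → Ω2 → ℝ)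
    (θ1 : Ω1) (θ2 : Ω2) (ψ : Metric.sphere (0 : Euc 2) 1) (z : Euc d1 × Euc d2) : ℝ :=
  (ψ : Euc 2) 0 * g1 z.1 θ1 + (ψ : Euc 2) 1 * g2 z.2 θ2

/-- `H2SW_p^p`: the `p`-th power of the hierarchical hybrid sliced Wasserstein distance. -/
def H2SWpPow {d1 d2 : ℕ} {Ω1 Ω2 : Type*} [MeasurableSpace Ω1] [MeasurableSpace Ω2]
    (p : ℝ) (σ1 : Measure Ω1) (σ2 : Measure Ω2)
    (g1 : Euc d1 → Ω1 → ℝ) (g2 : Euc d2 → Ω2 → ℝ)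
    (μ ν : Measure (Euc d1 × Euc d2)) : ℝ≥0∞ :=
  ∫⁻ w : Ω1 × Ω2 × Metric.sphere (0 : Euc 2) 1,
    WpPow p (μ.map (Tmap g1 g2 w.1 w.2.1 w.2.2)) (ν.map (Tmap g1 g2 w.1 w.2.1 w.2.2))
    ∂(σ1.prod (σ2.prod (sphereUniform 2)))

/-- The hierarchical hybrid sliced Wasserstein distance of order `p`. -/
def H2SW {d1 d2 : ℕ} {Ω1 Ω2 : Type*} [MeasurableSpace Ω1] [MeasurableSpace Ω2]
    (p : ℝ) (σ1 : Measure Ω1) (σ2 : Measure Ω2)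
    (g1 : Euc d1 → Ω1 → ℝ) (g2 : Euc d2 → Ω2 → ℝ)
    (μ ν : Measure (Euc d1 × Euc d2)) : ℝ≥0∞ :=
  H2SWpPow p σ1 σ2 g1 g2 μ ν ^ (1 / p)

/-- The joint Wasserstein-1 distance on `ℝ^{d1} × ℝ^{d2}` with mixed ground cost
`c((x1,x2),(y1,y2)) = ‖x1 − y1‖₂ + ‖x2 − y2‖₂`. -/
def jointW1 {d1 d2 : ℕ} (μ ν : Measure (Euc d1 × Euc d2)) : ℝ≥0∞ :=
  ⨅ π ∈ couplings μ ν,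
    ∫⁻ z : (Euc d1 × Euc d2) × (Euc d1 × Euc d2),
      edist z.1.1 z.2.1 + edist z.1.2 z.2.2 ∂π

lemma abs_coord_le_norm {d : ℕ} (ψ : Euc d) (i : Fin d) : |ψ i| ≤ ‖ψ‖ := by
  have h := abs_real_inner_le_norm (EuclideanSpace.single i (1 : ℝ)) ψ
  rwa [EuclideanSpace.inner_single_left, EuclideanSpace.norm_single, norm_one, one_mul,
    map_one, one_mul] at h

lemma measurable_Tmap {d1 d2 : ℕ} (θ1 : Metric.sphere (0 : Euc d1) 1)
    (θ2 : Metric.sphere (0 : Euc d2) 1) (ψ : Metric.sphere (0 : Euc 2) 1) :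
    Measurable (Tmap (fun (x : Euc d1) (θ : Metric.sphere (0 : Euc d1) 1) => ⟪x, (θ : Euc d1)⟫)
      (fun (x : Euc d2) (θ : Metric.sphere (0 : Euc d2) 1) => ⟪x, (θ : Euc d2)⟫) θ1 θ2 ψ) := by
  unfold Tmap
  exact ((continuous_const.mul (continuous_fst.inner continuous_const)).add
    (continuous_const.mul (continuous_snd.inner continuous_const))).measurable

lemma Tmap_dist_le {d1 d2 : ℕ} (θ1 : Metric.sphere (0 : Euc d1) 1)
    (θ2 : Metric.sphere (0 : Euc d2) 1) (ψ : Metric.sphere (0 : Euc 2) 1)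
    (x y : Euc d1 × Euc d2) :
    dist (Tmap (fun (x : Euc d1) (θ : Metric.sphere (0 : Euc d1) 1) => ⟪x, (θ : Euc d1)⟫)
        (fun (x : Euc d2) (θ : Metric.sphere (0 : Euc d2) 1) => ⟪x, (θ : Euc d2)⟫) θ1 θ2 ψ x)
      (Tmap (fun (x : Euc d1) (θ : Metric.sphere (0 : Euc d1) 1) => ⟪x, (θ : Euc d1)⟫)
        (fun (x : Euc d2) (θ : Metric.sphere (0 : Euc d2) 1) => ⟪x, (θ : Euc d2)⟫) θ1 θ2 ψ y)
      ≤ dist x.1 y.1 + dist x.2 y.2 := by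
  have hψ : ‖(ψ : Euc 2)‖ = 1 := by
    simpa using mem_sphere_zero_iff_norm.mp ψ.2
  have hθ1 : ‖(θ1 : Euc d1)‖ = 1 := by
    simpa using mem_sphere_zero_iff_norm.mp θ1.2
  have hθ2 : ‖(θ2 : Euc d2)‖ = 1 := by
    simpa using mem_sphere_zero_iff_norm.mp θ2.2
  unfold Tmap
  rw [Real.dist_eq]
  have heq : (ψ : Euc 2) 0 * ⟪x.1, (θ1 : Euc d1)⟫ + (ψ : Euc 2) 1 * ⟪x.2, (θ2 : Euc d2)⟫
      - ((ψ : Euc 2) 0 * ⟪y.1, (θ1 : Euc d1)⟫ + (ψ : Euc 2) 1 * ⟪y.2, (θ2 : Euc d2)⟫)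
      = (ψ : Euc 2) 0 * ⟪x.1 - y.1, (θ1 : Euc d1)⟫
        + (ψ : Euc 2) 1 * ⟪x.2 - y.2, (θ2 : Euc d2)⟫ := by
    rw [inner_sub_left, inner_sub_left]; ring
  rw [heq]
  calc |(ψ : Euc 2) 0 * ⟪x.1 - y.1, (θ1 : Euc d1)⟫
        + (ψ : Euc 2) 1 * ⟪x.2 - y.2, (θ2 : Euc d2)⟫|
      ≤ |(ψ : Euc 2) 0 * ⟪x.1 - y.1, (θ1 : Euc d1)⟫|
        + |(ψ : Euc 2) 1 * ⟪x.2 - y.2, (θ2 : Euc d2)⟫| := abs_add_le _ _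
    _ ≤ 1 * (‖x.1 - y.1‖ * ‖(θ1 : Euc d1)‖) + 1 * (‖x.2 - y.2‖ * ‖(θ2 : Euc d2)‖) := by
        rw [abs_mul, abs_mul]
        gcongr
        · exact (abs_coord_le_norm _ 0).trans hψ.le
        · exact abs_real_inner_le_norm _ _
        · exact (abs_coord_le_norm _ 1).trans hψ.le
        · exact abs_real_inner_le_norm _ _
    _ = dist x.1 y.1 + dist x.2 y.2 := by
        rw [hθ1, hθ2, dist_eq_norm, dist_eq_norm]; ring

instance sphereUniform_sfinite {d : ℕ} : SFinite (sphereUniform d) :=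
  inferInstanceAs (SFinite ((((volume : Measure (Euc d)).toSphere Set.univ)⁻¹ : ℝ≥0∞) •
    (volume : Measure (Euc d)).toSphere))

lemma sphereUniform_univ_le {d : ℕ} : sphereUniform d Set.univ ≤ 1 := by
  rw [sphereUniform, Measure.smul_apply, smul_eq_mul]
  rcases eq_or_ne ((volume : Measure (Euc d)).toSphere Set.univ) 0 with h | h
  · simp [h]
  · rw [ENNReal.inv_mul_cancel h (measure_ne_top _ _)]

/-- **Proposition 3(iii)**: for Borel probability measures `μ, ν` on `ℝ^{d1} × ℝ^{d2}`
with finite first moments, the H2SW distance of order 1 with linear defining functions is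
bounded by the joint Wasserstein-1 distance with ground cost
`c((x1,x2),(y1,y2)) = ‖x1 − y1‖₂ + ‖x2 − y2‖₂`. -/
theorem h2sw_one_le_joint_wasserstein (d1 d2 : ℕ) (hd1 : 1 ≤ d1) (hd2 : 1 ≤ d2)
    (μ ν : Measure (Euc d1 × Euc d2))
    [IsProbabilityMeasure μ] [IsProbabilityMeasure ν]
    (hmom : ∀ κ ∈ ({μ, ν} : Set (Measure (Euc d1 × Euc d2))),
      ∫⁻ z : Euc d1 × Euc d2, ENNReal.ofReal (‖z.1‖ + ‖z.2‖) ∂κ < ⊤) :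
    H2SW 1 (sphereUniform d1) (sphereUniform d2)
        (fun x θ => ⟪x, (θ : Euc d1)⟫) (fun x θ => ⟪x, (θ : Euc d2)⟫) μ ν
      ≤ jointW1 μ ν := by
  rw [H2SW, jointW1]
  have h11 : (1 : ℝ) / 1 = 1 := by norm_num
  rw [h11, ENNReal.rpow_one]
  refine le_iInf₂ fun π hπ => ?_
  set C : ℝ≥0∞ := ∫⁻ z : (Euc d1 × Euc d2) × (Euc d1 × Euc d2),
      edist z.1.1 z.2.1 + edist z.1.2 z.2.2 ∂π with hC
  have key : ∀ w : Metric.sphere (0 : Euc d1) 1 ×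
      Metric.sphere (0 : Euc d2) 1 × Metric.sphere (0 : Euc 2) 1,
      WpPow 1
        (μ.map (Tmap (fun (x : Euc d1) (θ : Metric.sphere (0 : Euc d1) 1) => ⟪x, (θ : Euc d1)⟫)
          (fun (x : Euc d2) (θ : Metric.sphere (0 : Euc d2) 1) => ⟪x, (θ : Euc d2)⟫) w.1 w.2.1 w.2.2))
        (ν.map (Tmap (fun (x : Euc d1) (θ : Metric.sphere (0 : Euc d1) 1) => ⟪x, (θ : Euc d1)⟫)
          (fun (x : Euc d2) (θ : Metric.sphere (0 : Euc d2) 1) => ⟪x, (θ : Euc d2)⟫) w.1 w.2.1 w.2.2))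
        ≤ C := by
    rintro ⟨θ1, θ2, ψ⟩
    set T := Tmap (fun (x : Euc d1) (θ : Metric.sphere (0 : Euc d1) 1) => ⟪x, (θ : Euc d1)⟫)
      (fun (x : Euc d2) (θ : Metric.sphere (0 : Euc d2) 1) => ⟪x, (θ : Euc d2)⟫) θ1 θ2 ψ with hT
    have hTm : Measurable T := measurable_Tmap θ1 θ2 ψ
    have hmem : π.map (Prod.map T T) ∈ couplings (μ.map T) (ν.map T) := by
      constructor
      · rw [Measure.map_map measurable_fst (hTm.prodMap hTm)]
        have : (Prod.fst ∘ Prod.map T T : (Euc d1 × Euc d2) × (Euc d1 × Euc d2) → ℝ)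
            = T ∘ Prod.fst := rfl
        rw [this, ← Measure.map_map hTm measurable_fst, hπ.1]
      · rw [Measure.map_map measurable_snd (hTm.prodMap hTm)]
        have : (Prod.snd ∘ Prod.map T T : (Euc d1 × Euc d2) × (Euc d1 × Euc d2) → ℝ)
            = T ∘ Prod.snd := rfl
        rw [this, ← Measure.map_map hTm measurable_snd, hπ.2]
    calc WpPow 1 (μ.map T) (ν.map T)
        ≤ ∫⁻ z : ℝ × ℝ, edist z.1 z.2 ^ (1 : ℝ) ∂(π.map (Prod.map T T)) :=
          iInf₂_le (π.map (Prod.map T T)) hmem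
      _ = ∫⁻ z : ℝ × ℝ, edist z.1 z.2 ∂(π.map (Prod.map T T)) := by
          simp [ENNReal.rpow_one]
      _ = ∫⁻ z, edist (T z.1) (T z.2) ∂π := by
          rw [lintegral_map measurable_edist (hTm.prodMap hTm)]
          rfl
      _ ≤ C := by
          refine lintegral_mono fun z => ?_
          rw [edist_dist, edist_dist, edist_dist, ← ENNReal.ofReal_add dist_nonneg dist_nonneg]
          exact ENNReal.ofReal_le_ofReal (Tmap_dist_le θ1 θ2 ψ z.1 z.2)
  calc H2SWpPow 1 (sphereUniform d1) (sphereUniform d2)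
        (fun x θ => ⟪x, (θ : Euc d1)⟫) (fun x θ => ⟪x, (θ : Euc d2)⟫) μ ν
      ≤ ∫⁻ _ : Metric.sphere (0 : Euc d1) 1 ×
          Metric.sphere (0 : Euc d2) 1 × Metric.sphere (0 : Euc 2) 1, C
          ∂((sphereUniform d1).prod ((sphereUniform d2).prod (sphereUniform 2))) :=
        lintegral_mono fun w => key w
    _ = C * ((sphereUniform d1).prod ((sphereUniform d2).prod (sphereUniform 2))) Set.univ :=
        lintegral_const C
    _ ≤ C * 1 := by
        gcongr
        rw [← Set.univ_prod_univ, Measure.prod_prod, ← Set.univ_prod_univ, Measure.prod_prod]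
        exact mul_le_one' sphereUniform_univ_le
          (mul_le_one' sphereUniform_univ_le sphereUniform_univ_le)
    _ = C := mul_one C
end
end
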